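/- In the SED game, suppose B_e ≥ t_w^all for all w ∈ W and π_w ≤ B_a for all w ∈ W. Then for every x ∈ [0,1]^W, the fractional relaxation value satisfies FracVal(x) ≤ 3·IntVal(x). (This is the core pointwise inequality in the proof of Theorem 4: the optimal fractional two-dimensional knapsack solution has at most two fractional variables, and each fractional term is dominated by a feasible single-website integral attack.) -/
import Mathlib


open Finset

/-- Feasibility of an (integral) attacker strategy `(y, e)` in the SED game:
`y ∈ {0,1}^W`, `e ≥ 0`, effort budget `Bₑ`, attack budget `Bₐ`, and `e_w ≤ t_w^all · y_w`. -/
def AttFeas {W : Type*} [Fintype W] (tall pii : W → ℝ) (Ba Be : ℝ) (y e : W → ℝ) : Prop :=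
  (∀ w, y w = 0 ∨ y w = 1) ∧ (∀ w, 0 ≤ e w) ∧
    (∑ w, e w ≤ Be) ∧ (∑ w, pii w * y w ≤ Ba) ∧ ∀ w, e w ≤ tall w * y w

/-- Feasibility for the fractional relaxation: `y ∈ [0,1]^W`. -/
def FracFeas {W : Type*} [Fintype W] (tall pii : W → ℝ) (Ba Be : ℝ) (y e : W → ℝ) : Prop :=
  (∀ w, y w ∈ Set.Icc (0:ℝ) 1) ∧ (∀ w, 0 ≤ e w) ∧
    (∑ w, e w ≤ Be) ∧ (∑ w, pii w * y w ≤ Ba) ∧ ∀ w, e w ≤ tall w * y w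

/-- Payoff `f(x,e) = ∑_w κ_w (1 - x_w) e_w`, where `κ_w = t_w / t_w^all`. -/
noncomputable def payoff {W : Type*} [Fintype W] (t tall x e : W → ℝ) : ℝ :=
  ∑ w, (t w / tall w) * (1 - x w) * e w

/-- `IntVal x`: the attacker's optimal value against defender strategy `x`. -/
noncomputable def IntVal {W : Type*} [Fintype W] (t tall pii : W → ℝ) (Ba Be : ℝ)
    (x : W → ℝ) : ℝ :=
  sSup {v | ∃ y e, AttFeas tall pii Ba Be y e ∧ v = payoff t tall x e}

/-- `FracVal x`: the attacker's optimal value in the fractional relaxation. -/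
noncomputable def FracVal {W : Type*} [Fintype W] (t tall pii : W → ℝ) (Ba Be : ℝ)
    (x : W → ℝ) : ℝ :=
  sSup {v | ∃ y e, FracFeas tall pii Ba Be y e ∧ v = payoff t tall x e}

/-- Feasible defender strategies: `x ∈ [0,1]^W` with `∑_w c_w t_w x_w ≤ B_d`. -/
def DefFeas {W : Type*} [Fintype W] (t c : W → ℝ) (Bd : ℝ) (x : W → ℝ) : Prop :=
  (∀ w, x w ∈ Set.Icc (0:ℝ) 1) ∧ ∑ w, c w * t w * x w ≤ Bd



section KeyAux

variable {W : Type*} [Fintype W] [DecidableEq W]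

lemma sum_three_support (u v z : W) (huv : u ≠ v) (huz : u ≠ z) (hvz : v ≠ z)
    (f : W → ℝ) (hf : ∀ w, w ≠ u → w ≠ v → w ≠ z → f w = 0) :
    ∑ w, f w = f u + f v + f z := by
  have h1 : ∑ w ∈ ({u, v, z} : Finset W), f w = ∑ w, f w := by
    apply Finset.sum_subset (Finset.subset_univ _)
    intro w _ hw
    simp only [Finset.mem_insert, Finset.mem_singleton, not_or] at hw
    exact hf w hw.1 hw.2.1 hw.2.2
  rw [← h1, Finset.sum_insert (by simp [huv, huz]), Finset.sum_insert (by simp [hvz]),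
    Finset.sum_singleton]
  ring

lemma exists_dir (c : W → ℝ) (u v z : W) (huv : u ≠ v) (huz : u ≠ z) (hvz : v ≠ z) :
    ∃ d : W → ℝ, (∀ w, w ≠ u → w ≠ v → w ≠ z → d w = 0) ∧ (∃ w, d w ≠ 0) ∧
      (∑ w, d w = 0) ∧ (∑ w, c w * d w = 0) := by
  by_cases h : c u = c v
  · refine ⟨fun w => if w = u then 1 else if w = v then -1 else 0, ?_, ⟨u, by simp⟩, ?_, ?_⟩
    · intro w h1 h2 _; simp [h1, h2]
    · rw [sum_three_support u v z huv huz hvz _ (fun w h1 h2 _ => by simp [h1, h2])]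
      simp [huv.symm, huz.symm, hvz.symm, huv, huz, hvz]
      try ring
    · rw [sum_three_support u v z huv huz hvz _ (fun w h1 h2 _ => by simp [h1, h2])]
      simp [huv.symm, huz.symm, hvz.symm, huv, huz, hvz]
      try linarith
  · refine ⟨fun w => if w = u then c v - c z else if w = v then c z - c u else
      if w = z then c u - c v else 0, ?_, ⟨z, ?_⟩, ?_, ?_⟩
    · intro w h1 h2 h3; simp [h1, h2, h3]
    · simp only [huz.symm, hvz.symm, if_neg, if_pos]
      simp [huz.symm, hvz.symm]
      intro hcon; exact h (by linarith)
    · rw [sum_three_support u v z huv huz hvz _ (fun w h1 h2 h3 => by simp [h1, h2, h3])]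
      simp [huv.symm, huz.symm, hvz.symm, huv, huz, hvz]
      try ring
    · rw [sum_three_support u v z huv huz hvz _ (fun w h1 h2 h3 => by simp [h1, h2, h3])]
      simp [huv.symm, huz.symm, hvz.symm, huv, huz, hvz]
      try ring

lemma key_base (a c tall : W → ℝ) (Ba Be I : ℝ)
    (ha : ∀ w, 0 ≤ a w) (hc : ∀ w, 0 ≤ c w) (hI : 0 ≤ I)
    (H1 : ∀ w, a w * tall w ≤ I)
    (H2 : ∀ S : Finset W, (∑ w ∈ S, c w * tall w) ≤ Ba → (∑ w ∈ S, tall w) ≤ Be →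
      (∑ w ∈ S, a w * tall w) ≤ I)
    (e : W → ℝ)
    (hcard : (Finset.univ.filter (fun w => 0 < e w ∧ e w < tall w)).card ≤ 2)
    (he0 : ∀ w, 0 ≤ e w) (he1 : ∀ w, e w ≤ tall w)
    (hBe : ∑ w, e w ≤ Be) (hBa : ∑ w, c w * e w ≤ Ba) :
    ∑ w, a w * e w ≤ 3 * I := by
  set F := Finset.univ.filter (fun w => 0 < e w ∧ e w < tall w) with hF
  set S := Finset.univ.filter (fun w => e w = tall w) with hS
  have hdisj : Disjoint S F := by
    rw [Finset.disjoint_left]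
    intro w hwS hwF
    rw [hS, Finset.mem_filter] at hwS
    rw [hF, Finset.mem_filter] at hwF
    linarith [hwS.2, hwF.2.2]
  have hzero : ∀ w ∈ Finset.univ, w ∉ S ∪ F → a w * e w = 0 := by
    intro w _ hw
    rw [Finset.mem_union, hS, hF, Finset.mem_filter, Finset.mem_filter] at hw
    push_neg at hw
    have h1 := hw.1 (Finset.mem_univ w)
    have h2 := hw.2 (Finset.mem_univ w)
    have he : e w = 0 := by
      rcases (he0 w).eq_or_lt with h | h
      · exact h.symm
      · rcases (he1 w).lt_or_eq with h' | h'
        · linarith [h2 h]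
        · exact absurd h' h1
    rw [he, mul_zero]
  have hsplit : ∑ w, a w * e w = ∑ w ∈ S, a w * e w + ∑ w ∈ F, a w * e w := by
    rw [← Finset.sum_union hdisj]
    exact (Finset.sum_subset (Finset.subset_univ _) hzero).symm
  have hSe : ∀ w ∈ S, e w = tall w := fun w hw => (Finset.mem_filter.mp hw).2
  have hSbound : ∑ w ∈ S, a w * e w ≤ I := by
    rw [Finset.sum_congr rfl (fun w hw => by rw [hSe w hw])]
    apply H2
    · calc ∑ w ∈ S, c w * tall w = ∑ w ∈ S, c w * e w :=
            Finset.sum_congr rfl (fun w hw => by rw [hSe w hw])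
        _ ≤ ∑ w, c w * e w := Finset.sum_le_sum_of_subset_of_nonneg (Finset.subset_univ _)
            (fun w _ _ => mul_nonneg (hc w) (he0 w))
        _ ≤ Ba := hBa
    · calc ∑ w ∈ S, tall w = ∑ w ∈ S, e w :=
            Finset.sum_congr rfl (fun w hw => by rw [hSe w hw])
        _ ≤ ∑ w, e w := Finset.sum_le_sum_of_subset_of_nonneg (Finset.subset_univ _)
            (fun w _ _ => he0 w)
        _ ≤ Be := hBe
  have hFbound : ∑ w ∈ F, a w * e w ≤ 2 * I := by
    calc ∑ w ∈ F, a w * e w ≤ ∑ _w ∈ F, I := by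
          apply Finset.sum_le_sum
          intro w _
          exact le_trans (mul_le_mul_of_nonneg_left (he1 w) (ha w)) (H1 w)
      _ = (F.card : ℝ) * I := by rw [Finset.sum_const, nsmul_eq_mul]
      _ ≤ 2 * I := by
          apply mul_le_mul_of_nonneg_right _ hI
          exact_mod_cast hcard
  linarith

lemma key_aux (a c tall : W → ℝ) (Ba Be I : ℝ)
    (ha : ∀ w, 0 ≤ a w) (hc : ∀ w, 0 ≤ c w) (hI : 0 ≤ I)
    (H1 : ∀ w, a w * tall w ≤ I)
    (H2 : ∀ S : Finset W, (∑ w ∈ S, c w * tall w) ≤ Ba → (∑ w ∈ S, tall w) ≤ Be →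
      (∑ w ∈ S, a w * tall w) ≤ I) :
    ∀ n : ℕ, ∀ e : W → ℝ,
      (Finset.univ.filter (fun w => 0 < e w ∧ e w < tall w)).card ≤ n →
      (∀ w, 0 ≤ e w) → (∀ w, e w ≤ tall w) →
      (∑ w, e w) ≤ Be → (∑ w, c w * e w) ≤ Ba →
      (∑ w, a w * e w) ≤ 3 * I := by
  intro n
  induction n with
  | zero =>
    intro e hcard he0 he1 hBe hBa
    exact key_base a c tall Ba Be I ha hc hI H1 H2 e (le_trans hcard (by norm_num)) he0 he1 hBe hBa
  | succ n ih =>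
    intro e hcard he0 he1 hBe hBa
    by_cases hle : (Finset.univ.filter (fun w => 0 < e w ∧ e w < tall w)).card ≤ 2
    · exact key_base a c tall Ba Be I ha hc hI H1 H2 e hle he0 he1 hBe hBa
    push_neg at hle
    set F := Finset.univ.filter (fun w => 0 < e w ∧ e w < tall w) with hFdef
    have h3 : 3 ≤ F.card := hle
    -- pick three distinct fractional elements
    obtain ⟨u, hu⟩ : F.Nonempty := Finset.card_pos.mp (by omega)
    obtain ⟨v, hv⟩ : (F.erase u).Nonempty := by
      apply Finset.card_pos.mp
      rw [Finset.card_erase_of_mem hu]; omega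
    obtain ⟨z, hz⟩ : ((F.erase u).erase v).Nonempty := by
      apply Finset.card_pos.mp
      rw [Finset.card_erase_of_mem hv, Finset.card_erase_of_mem hu]; omega
    have hvu : v ≠ u := (Finset.mem_erase.mp hv).1
    have hvF : v ∈ F := (Finset.mem_erase.mp hv).2
    have hzv : z ≠ v := (Finset.mem_erase.mp hz).1
    have hzu : z ≠ u := (Finset.mem_erase.mp (Finset.mem_erase.mp hz).2).1
    have hzF : z ∈ F := (Finset.mem_erase.mp (Finset.mem_erase.mp hz).2).2
    obtain ⟨d, hdsupp, hdne, hdsum, hcdsum⟩ :=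
      exists_dir c u v z hvu.symm hzu.symm hzv.symm
    -- choose direction with nonnegative payoff derivative
    have hg : ∃ g : W → ℝ, (∀ w, w ≠ u → w ≠ v → w ≠ z → g w = 0) ∧ (∃ w, g w ≠ 0) ∧
        (∑ w, g w = 0) ∧ (∑ w, c w * g w = 0) ∧ 0 ≤ ∑ w, a w * g w := by
      rcases le_or_gt 0 (∑ w, a w * d w) with had | had
      · exact ⟨d, hdsupp, hdne, hdsum, hcdsum, had⟩
      · refine ⟨fun w => -d w, fun w h1 h2 h3 => by simp [hdsupp w h1 h2 h3],
          ?_, ?_, ?_, ?_⟩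
        · obtain ⟨w1, hw1⟩ := hdne
          exact ⟨w1, by simpa using hw1⟩
        · simpa using hdsum
        · have : ∑ w, c w * (-d w) = -∑ w, c w * d w := by
            rw [← Finset.sum_neg_distrib]
            exact Finset.sum_congr rfl (fun w _ => by ring)
          rw [this, hcdsum, neg_zero]
        · have : ∑ w, a w * (-d w) = -∑ w, a w * d w := by
            rw [← Finset.sum_neg_distrib]
            exact Finset.sum_congr rfl (fun w _ => by ring)
          rw [this]; linarith
    obtain ⟨g, hgsupp, ⟨w1, hw1⟩, hgsum, hcgsum, hagsum⟩ := hg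
    -- membership in F for support of g
    have hsuppF : ∀ w, g w ≠ 0 → w ∈ F := by
      intro w hw
      by_contra hwF
      have h1 : w ≠ u := fun h => hwF (h ▸ hu)
      have h2 : w ≠ v := fun h => hwF (h ▸ hvF)
      have h3 : w ≠ z := fun h => hwF (h ▸ hzF)
      exact hw (hgsupp w h1 h2 h3)
    have hfrac : ∀ w, g w ≠ 0 → 0 < e w ∧ e w < tall w := by
      intro w hw
      exact (Finset.mem_filter.mp (hsuppF w hw)).2
    -- the step size
    set M := Finset.univ.filter (fun w => g w ≠ 0) with hMdef
    have hMne : M.Nonempty := ⟨w1, Finset.mem_filter.mpr ⟨Finset.mem_univ _, hw1⟩⟩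
    set s : W → ℝ := fun w => if 0 < g w then (tall w - e w) / g w else e w / (-g w) with hsdef
    set τ := M.inf' hMne s with hτdef
    have hτpos : 0 < τ := by
      rw [hτdef, Finset.lt_inf'_iff]
      intro w hw
      have hgw : g w ≠ 0 := (Finset.mem_filter.mp hw).2
      obtain ⟨hf1, hf2⟩ := hfrac w hgw
      rcases hgw.lt_or_gt with hneg | hpos
      · rw [hsdef]
        simp only [if_neg (not_lt.mpr hneg.le)]
        exact div_pos hf1 (by linarith)
      · rw [hsdef]
        simp only [if_pos hpos]
        exact div_pos (by linarith) hpos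
    have hτle : ∀ w, g w ≠ 0 → τ ≤ s w := by
      intro w hw
      exact Finset.inf'_le s (Finset.mem_filter.mpr ⟨Finset.mem_univ _, hw⟩)
    -- bounds on the moved point
    have hbound : ∀ w, 0 ≤ e w + τ * g w ∧ e w + τ * g w ≤ tall w := by
      intro w
      rcases eq_or_ne (g w) 0 with hgw | hgw
      · rw [hgw, mul_zero, add_zero]; exact ⟨he0 w, he1 w⟩
      rcases hgw.lt_or_gt with hneg | hpos
      · have hsw := hτle w hgw
        have hswval : s w = e w / (-g w) := by
          rw [hsdef]; simp only [if_neg (not_lt.mpr hneg.le)]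
        have hkey : τ * (-g w) ≤ e w := by
          have := mul_le_mul_of_nonneg_right hsw (by linarith : (0:ℝ) ≤ -g w)
          rwa [hswval, div_mul_cancel₀ _ (by linarith : -g w ≠ 0)] at this
        constructor
        · linarith
        · nlinarith [he1 w]
      · have hsw := hτle w hgw
        have hswval : s w = (tall w - e w) / g w := by
          rw [hsdef]; simp only [if_pos hpos]
        have hkey : τ * g w ≤ tall w - e w := by
          have := mul_le_mul_of_nonneg_right hsw hpos.le
          rwa [hswval, div_mul_cancel₀ _ hpos.ne'] at this
        constructor
        · nlinarith [he0 w]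
        · linarith
    -- sums of the moved point
    have hsum_e : ∑ w, (e w + τ * g w) = ∑ w, e w := by
      rw [Finset.sum_add_distrib, ← Finset.mul_sum, hgsum, mul_zero, add_zero]
    have hsum_c : ∑ w, c w * (e w + τ * g w) = ∑ w, c w * e w := by
      have : ∀ w ∈ Finset.univ, c w * (e w + τ * g w) = c w * e w + τ * (c w * g w) :=
        fun w _ => by ring
      rw [Finset.sum_congr rfl this, Finset.sum_add_distrib, ← Finset.mul_sum, hcgsum,
        mul_zero, add_zero]
    have hsum_a : ∑ w, a w * e w ≤ ∑ w, a w * (e w + τ * g w) := by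
      have : ∀ w ∈ Finset.univ, a w * (e w + τ * g w) = a w * e w + τ * (a w * g w) :=
        fun w _ => by ring
      rw [Finset.sum_congr rfl this, Finset.sum_add_distrib, ← Finset.mul_sum]
      nlinarith [mul_nonneg hτpos.le hagsum]
    -- the minimizer hits a boundary
    obtain ⟨w₀, hw₀M, hw₀⟩ := Finset.exists_mem_eq_inf' hMne s
    have hgw₀ : g w₀ ≠ 0 := (Finset.mem_filter.mp hw₀M).2
    have hw₀F : w₀ ∈ F := hsuppF w₀ hgw₀
    have hbdry : e w₀ + τ * g w₀ = tall w₀ ∨ e w₀ + τ * g w₀ = 0 := by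
      rcases hgw₀.lt_or_gt with hneg | hpos
      · right
        have hswval : s w₀ = e w₀ / (-g w₀) := by
          rw [hsdef]; simp only [if_neg (not_lt.mpr hneg.le)]
        have hτval : τ = s w₀ := hw₀
        rw [hτval, hswval, div_mul_eq_mul_div, div_neg, mul_div_cancel_right₀ _ hgw₀]
        ring
      · left
        have hswval : s w₀ = (tall w₀ - e w₀) / g w₀ := by
          rw [hsdef]; simp only [if_pos hpos]
        have hτval : τ = s w₀ := hw₀
        rw [hτval, hswval, div_mul_cancel₀ _ hgw₀]
        ring
    -- fractional set strictly decreases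
    have hsubset : (Finset.univ.filter (fun w => 0 < e w + τ * g w ∧ e w + τ * g w < tall w))
        ⊆ F.erase w₀ := by
      intro w hw
      obtain ⟨-, hfw⟩ := Finset.mem_filter.mp hw
      rw [Finset.mem_erase]
      constructor
      · rintro rfl
        rcases hbdry with h | h
        · linarith [hfw.2]
        · linarith [hfw.1]
      · rcases eq_or_ne (g w) 0 with hgw | hgw
        · rw [hFdef, Finset.mem_filter]
          refine ⟨Finset.mem_univ _, ?_⟩
          rw [hgw, mul_zero, add_zero] at hfw
          exact hfw
        · exact hsuppF w hgw
    have hcard' : (Finset.univ.filter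
        (fun w => 0 < e w + τ * g w ∧ e w + τ * g w < tall w)).card ≤ n := by
      have h1 := Finset.card_le_card hsubset
      rw [Finset.card_erase_of_mem hw₀F] at h1
      omega
    have := ih (fun w => e w + τ * g w) hcard' (fun w => (hbound w).1) (fun w => (hbound w).2)
      (by rw [hsum_e]; exact hBe) (by rw [hsum_c]; exact hBa)
    calc ∑ w, a w * e w ≤ ∑ w, a w * (e w + τ * g w) := hsum_a
      _ ≤ 3 * I := this
end KeyAux


/-- core inequality in Theorem 4: if `B_e ≥ t_w^all` and
`π_w ≤ B_a` for all `w`, then the fractional relaxation value is at most three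
times the integral value, pointwise in the defender strategy `x`. -/
theorem fracVal_le_three_intVal
    {W : Type*} [Fintype W] (t tall c pii : W → ℝ) (Bd Ba Be : ℝ)
    (ht : ∀ w, 0 < t w) (htall : ∀ w, t w ≤ tall w)
    (hc : ∀ w, 0 < c w) (hpii : ∀ w, 0 < pii w)
    (hBd : 0 ≤ Bd) (hBa : 0 ≤ Ba) (hBe : 0 ≤ Be)
    (hBe' : ∀ w, tall w ≤ Be) (haff : ∀ w, pii w ≤ Ba)
    (x : W → ℝ) (hx : ∀ w, x w ∈ Set.Icc (0:ℝ) 1) :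
    FracVal t tall pii Ba Be x ≤ 3 * IntVal t tall pii Ba Be x := by
  classical
  have htall0 : ∀ w, 0 < tall w := fun w => (ht w).trans_le (htall w)
  set a : W → ℝ := fun w => t w / tall w * (1 - x w) with ha_def
  have ha0 : ∀ w, 0 ≤ a w := fun w =>
    mul_nonneg (div_nonneg (ht w).le (htall0 w).le) (by linarith [(hx w).2])
  have ha1 : ∀ w, a w ≤ 1 := by
    intro w
    have h1 : t w / tall w ≤ 1 := (div_le_one (htall0 w)).mpr (htall w)
    have h2 : (0:ℝ) ≤ t w / tall w := div_nonneg (ht w).le (htall0 w).le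
    have h3 : 1 - x w ≤ 1 := by linarith [(hx w).1]
    have h4 : (0:ℝ) ≤ 1 - x w := by linarith [(hx w).2]
    show t w / tall w * (1 - x w) ≤ 1
    nlinarith
  have hpayoff : ∀ e : W → ℝ, payoff t tall x e = ∑ w, a w * e w := fun e => rfl
  set AS := {v | ∃ y e, AttFeas tall pii Ba Be y e ∧ v = payoff t tall x e} with hAS
  have hbdd : BddAbove AS := by
    refine ⟨Be, ?_⟩
    rintro v ⟨y, e, ⟨hy01, he0, hBe2, hBa2, hety⟩, rfl⟩
    rw [hpayoff]
    calc ∑ w, a w * e w ≤ ∑ w, e w :=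
          Finset.sum_le_sum (fun w _ => by nlinarith [ha0 w, ha1 w, he0 w])
      _ ≤ Be := hBe2
  have hIeq : IntVal t tall pii Ba Be x = sSup AS := rfl
  set I := IntVal t tall pii Ba Be x with hIdef
  have hI0 : 0 ≤ I := by
    have hm : (0:ℝ) ∈ AS := by
      refine ⟨fun _ => 0, fun _ => 0, ⟨fun w => Or.inl rfl, fun w => le_refl 0, ?_, ?_, fun w => by simp⟩, ?_⟩
      · simpa using hBe
      · simpa using hBa
      · simp [payoff]
    exact le_csSup hbdd hm
  have hmem_attack : ∀ S : Finset W, (∑ w ∈ S, pii w) ≤ Ba → (∑ w ∈ S, tall w) ≤ Be →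
      (∑ w ∈ S, a w * tall w) ≤ I := by
    intro S hSa hSe
    have hfeas : AttFeas tall pii Ba Be (fun w => if w ∈ S then 1 else 0)
        (fun w => if w ∈ S then tall w else 0) := by
      refine ⟨fun w => by by_cases h : w ∈ S <;> simp [h],
        fun w => by by_cases h : w ∈ S <;> simp [h, (htall0 w).le], ?_, ?_,
        fun w => by by_cases h : w ∈ S <;> simp [h]⟩
      · rw [Finset.sum_ite_mem, Finset.univ_inter]; exact hSe
      · calc ∑ w, pii w * (if w ∈ S then (1:ℝ) else 0)
              = ∑ w, (if w ∈ S then pii w else 0) :=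
              Finset.sum_congr rfl (fun w _ => by by_cases h : w ∈ S <;> simp [h])
          _ = ∑ w ∈ S, pii w := by rw [Finset.sum_ite_mem, Finset.univ_inter]
          _ ≤ Ba := hSa
    have hval : payoff t tall x (fun w => if w ∈ S then tall w else 0)
        = ∑ w ∈ S, a w * tall w := by
      rw [hpayoff]
      calc ∑ w, a w * (if w ∈ S then tall w else 0)
            = ∑ w, (if w ∈ S then a w * tall w else 0) :=
            Finset.sum_congr rfl (fun w _ => by by_cases h : w ∈ S <;> simp [h])
        _ = _ := by rw [Finset.sum_ite_mem, Finset.univ_inter]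
    have hm : (∑ w ∈ S, a w * tall w) ∈ AS := ⟨_, _, hfeas, hval.symm⟩
    exact le_csSup hbdd hm
  have H1 : ∀ w, a w * tall w ≤ I := by
    intro w
    have := hmem_attack {w} (by simpa using haff w) (by simpa using hBe' w)
    simpa using this
  set cc : W → ℝ := fun w => pii w / tall w with hccdef
  have hcc0 : ∀ w, 0 ≤ cc w := fun w => div_nonneg (hpii w).le (htall0 w).le
  have H2 : ∀ S : Finset W, (∑ w ∈ S, cc w * tall w) ≤ Ba → (∑ w ∈ S, tall w) ≤ Be →
      (∑ w ∈ S, a w * tall w) ≤ I := by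
    intro S h1 h2
    apply hmem_attack S _ h2
    have : ∑ w ∈ S, cc w * tall w = ∑ w ∈ S, pii w :=
      Finset.sum_congr rfl (fun w _ => div_mul_cancel₀ _ (htall0 w).ne')
    rwa [this] at h1
  have key := key_aux a cc tall Ba Be I ha0 hcc0 hI0 H1 H2 (Fintype.card W)
  apply Real.sSup_le
  · rintro v ⟨y, e, ⟨hy01, he0, hBeF, hBaF, hety⟩, rfl⟩
    rw [hpayoff]
    apply key e
    · exact le_trans (Finset.card_filter_le _ _) (by simp)
    · exact he0
    · intro w
      calc e w ≤ tall w * y w := hety w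
        _ ≤ tall w * 1 := mul_le_mul_of_nonneg_left (hy01 w).2 (htall0 w).le
        _ = tall w := mul_one _
    · exact hBeF
    · calc ∑ w, cc w * e w ≤ ∑ w, pii w * y w := by
            apply Finset.sum_le_sum
            intro w _
            rw [hccdef]
            rw [div_mul_eq_mul_div, div_le_iff₀ (htall0 w)]
            calc pii w * e w ≤ pii w * (tall w * y w) :=
                  mul_le_mul_of_nonneg_left (hety w) (hpii w).le
              _ = pii w * y w * tall w := by ring
        _ ≤ Ba := hBaF
  · linarith
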